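/- Let H be a Hopf algebra with twist F, A and B left H-module algebras, V a left H-module (A,B)-bimodule. For a K-linear map P : V → V define D_F(P) := (f̄^α ▶ P) ∘ (f̄_α ▷). If P is right B-linear, then D_F(P) is right B_⋆-linear on the deformed module V_⋆: D_F(P)(v ⋆ b) = D_F(P)(v) ⋆ b for all v ∈ V, b ∈ B, where v ⋆ b = (f̄^α ▷ v)·(f̄_α ▷ b). -/

import Mathlib

open TensorProduct

noncomputable section

variable (K : Type*) [CommRing K] (H : Type*) [Ring H] [HopfAlgebra K H]

namespace TwistPaper

def ΔH : H →ₗ[K] H ⊗[K] H := Coalgebra.comul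
def εH : H →ₗ[K] K := Coalgebra.counit
def SH : H →ₗ[K] H := HopfAlgebra.antipode (R := K)

def ins3 : H ⊗[K] H →ₗ[K] H ⊗[K] (H ⊗[K] H) :=
  LinearMap.lTensor H ((TensorProduct.mk K H H).flip 1)
def ins1 : H ⊗[K] H →ₗ[K] H ⊗[K] (H ⊗[K] H) :=
  TensorProduct.mk K H (H ⊗[K] H) 1
def comulLeft : H ⊗[K] H →ₗ[K] H ⊗[K] (H ⊗[K] H) :=
  (TensorProduct.assoc K H H H).toLinearMap ∘ₗ (ΔH K H).rTensor H
def comulRight : H ⊗[K] H →ₗ[K] H ⊗[K] (H ⊗[K] H) :=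
  (ΔH K H).lTensor H
def counitLeft : H ⊗[K] H →ₗ[K] H :=
  (TensorProduct.lid K H).toLinearMap ∘ₗ (εH K H).rTensor H
def counitRight : H ⊗[K] H →ₗ[K] H :=
  (TensorProduct.rid K H).toLinearMap ∘ₗ (εH K H).lTensor H

/-- `F` is a twist of the Hopf algebra `H` with inverse `Finv`. -/
structure IsTwist (F Finv : H ⊗[K] H) : Prop where
  mul_inv : F * Finv = 1
  inv_mul : Finv * F = 1
  cocycle : ins3 K H F * comulLeft K H F = ins1 K H F * comulRight K H F
  counit_left : counitLeft K H F = 1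
  counit_right : counitRight K H F = 1

/-- `sw x f g c v w = Σ c (f x¹ v) (g x² w)` for `x = Σ x¹ ⊗ x²`. -/
def sw {V W V' W' Z : Type*}
    [AddCommGroup V] [Module K V] [AddCommGroup W] [Module K W]
    [AddCommGroup V'] [Module K V'] [AddCommGroup W'] [Module K W']
    [AddCommGroup Z] [Module K Z]
    (x : H ⊗[K] H) (f : H →ₗ[K] V →ₗ[K] V') (g : H →ₗ[K] W →ₗ[K] W')
    (c : V' →ₗ[K] W' →ₗ[K] Z) : V →ₗ[K] W →ₗ[K] Z :=
  ((TensorProduct.mapBilinear (σ₁₂ := RingHom.id K) (M := H) (N := H) (M₂ := V') (N₂ := W')).compr₂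
      (TensorProduct.lift c ∘ₗ LinearMap.applyₗ (R := K) x)).compl₁₂ f.flip g.flip

/-- `ρ` is a left `H`-module structure. -/
def IsHAction {V : Type*} [AddCommGroup V] [Module K V] (ρ : H →ₗ[K] V →ₗ[K] V) : Prop :=
  (∀ ξ ζ : H, ∀ v : V, ρ (ξ * ζ) v = ρ ξ (ρ ζ v)) ∧ (∀ v : V, ρ 1 v = v)

/-- `(A, m, ρ)` is a left `H`-module algebra. -/
def IsModuleAlgebra {A : Type*} [AddCommGroup A] [Module K A]
    (m : A →ₗ[K] A →ₗ[K] A) (ρ : H →ₗ[K] A →ₗ[K] A) : Prop :=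
  IsHAction K H ρ ∧ ∀ (ξ : H) (a b : A), ρ ξ (m a b) = sw K H (ΔH K H ξ) ρ ρ m a b

/-- `conjEnd f g (η ⊗ ζ) P = f η ∘ₗ P ∘ₗ g ζ` on `Hom_K(V,W)`. -/
def conjEnd {V W : Type*} [AddCommGroup V] [Module K V] [AddCommGroup W] [Module K W]
    (f : H →ₗ[K] W →ₗ[K] W) (g : H →ₗ[K] V →ₗ[K] V) :
    H ⊗[K] H →ₗ[K] (V →ₗ[K] W) →ₗ[K] (V →ₗ[K] W) :=
  TensorProduct.lift
    ((LinearMap.llcomp K (V →ₗ[K] W) (V →ₗ[K] W) (V →ₗ[K] W) ∘ₗ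
        (LinearMap.llcomp K V W W ∘ₗ f)).compl₂
      ((LinearMap.llcomp K V V W).flip ∘ₗ g))

/-- `twistEnd F1 F2 (η ⊗ ζ) = F1 η ∘ₗ F2 ζ` as an operator on `X`. -/
def twistEnd {X : Type*} [AddCommGroup X] [Module K X]
    (F1 F2 : H →ₗ[K] X →ₗ[K] X) : H ⊗[K] H →ₗ[K] X →ₗ[K] X :=
  TensorProduct.lift ((LinearMap.llcomp K X X X ∘ₗ F1).compl₂ F2)

/-- The `H`-adjoint action `ξ ▶ P = (ξ₁ ▷) ∘ P ∘ (S(ξ₂) ▷)` on `Hom_K(V,W)`. -/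
def adjHom {V W : Type*} [AddCommGroup V] [Module K V] [AddCommGroup W] [Module K W]
    (ρW : H →ₗ[K] W →ₗ[K] W) (ρV : H →ₗ[K] V →ₗ[K] V) :
    H →ₗ[K] (V →ₗ[K] W) →ₗ[K] (V →ₗ[K] W) :=
  conjEnd K H ρW (ρV ∘ₗ SH K H) ∘ₗ ΔH K H

/-- The deformation map `D_F(P) = (f̄^α ▶ P) ∘ (f̄_α ▷)` on `Hom_K(V,W)`. -/
def DFhom {V W : Type*} [AddCommGroup V] [Module K V] [AddCommGroup W] [Module K W]
    (Finv : H ⊗[K] H) (ρW : H →ₗ[K] W →ₗ[K] W) (ρV : H →ₗ[K] V →ₗ[K] V) :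
    (V →ₗ[K] W) →ₗ[K] (V →ₗ[K] W) :=
  twistEnd K H ((LinearMap.llcomp K V V W).flip ∘ₗ ρV) (adjHom K H ρW ρV)
    (TensorProduct.comm K H H Finv)


variable {A B V : Type*} [AddCommGroup A] [Module K A] [AddCommGroup B] [Module K B]
  [AddCommGroup V] [Module K V]

section Aux

open Coalgebra TensorProduct

-- unfolding lemmas
lemma DeltaH_eq : ΔH K H = Coalgebra.comul := rfl
lemma SH_eq : SH K H = HopfAlgebra.antipode (R := K) := rfl

variable {K H}

lemma sw_apply {V W V' W' Z : Type*}
    [AddCommGroup V] [Module K V] [AddCommGroup W] [Module K W]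
    [AddCommGroup V'] [Module K V'] [AddCommGroup W'] [Module K W']
    [AddCommGroup Z] [Module K Z]
    (x : H ⊗[K] H) (f : H →ₗ[K] V →ₗ[K] V') (g : H →ₗ[K] W →ₗ[K] W')
    (c : V' →ₗ[K] W' →ₗ[K] Z) (v : V) (w : W) :
    sw K H x f g c v w
      = TensorProduct.lift c (TensorProduct.map (f.flip v) (g.flip w) x) := rfl

lemma sw_tmul {V W V' W' Z : Type*}
    [AddCommGroup V] [Module K V] [AddCommGroup W] [Module K W]
    [AddCommGroup V'] [Module K V'] [AddCommGroup W'] [Module K W']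
    [AddCommGroup Z] [Module K Z]
    (η ζ : H) (f : H →ₗ[K] V →ₗ[K] V') (g : H →ₗ[K] W →ₗ[K] W')
    (c : V' →ₗ[K] W' →ₗ[K] Z) (v : V) (w : W) :
    sw K H (η ⊗ₜ[K] ζ) f g c v w = c (f η v) (g ζ w) := by
  simp [sw_apply]

lemma conjEnd_tmul {V W : Type*} [AddCommGroup V] [Module K V] [AddCommGroup W] [Module K W]
    (f : H →ₗ[K] W →ₗ[K] W) (g : H →ₗ[K] V →ₗ[K] V) (η ζ : H) (Q : V →ₗ[K] W) :
    conjEnd K H f g (η ⊗ₜ[K] ζ) Q = f η ∘ₗ Q ∘ₗ g ζ := by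
  ext m; simp [conjEnd]

lemma twistEnd_tmul {X : Type*} [AddCommGroup X] [Module K X]
    (F1 F2 : H →ₗ[K] X →ₗ[K] X) (η ζ : H) (x : X) :
    twistEnd K H F1 F2 (η ⊗ₜ[K] ζ) x = F1 η (F2 ζ x) := by
  simp [twistEnd]

lemma adjHom_repr {V W : Type*} [AddCommGroup V] [Module K V] [AddCommGroup W] [Module K W]
    (ρW : H →ₗ[K] W →ₗ[K] W) (ρV : H →ₗ[K] V →ₗ[K] V) (ξ : H)
    {ιrξ : Type*} (rξ : Coalgebra.Repr K ξ ιrξ) (Q : V →ₗ[K] W) (m : V) :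
    adjHom K H ρW ρV ξ Q m
      = ∑ i ∈ rξ.index, ρW (rξ.left i) (Q (ρV (SH K H (rξ.right i)) m)) := by
  have : adjHom K H ρW ρV ξ = conjEnd K H ρW (ρV ∘ₗ SH K H) (Coalgebra.comul ξ) := rfl
  rw [this, ← rξ.eq]
  simp only [map_sum, LinearMap.coe_sum, Finset.sum_apply]
  refine Finset.sum_congr rfl fun i _ => ?_
  rw [conjEnd_tmul]
  simp

lemma DFhom_tmul {V W : Type*} [AddCommGroup V] [Module K V] [AddCommGroup W] [Module K W]
    (x y : H) (ρW : H →ₗ[K] W →ₗ[K] W) (ρV : H →ₗ[K] V →ₗ[K] V) (Q : V →ₗ[K] W) (m : V) :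
    DFhom K H (x ⊗ₜ[K] y) ρW ρV Q m = adjHom K H ρW ρV x Q (ρV y m) := by
  simp [DFhom, twistEnd_tmul]

-- a trilinear lift
noncomputable def L3 {W : Type*} [AddCommGroup W] [Module K W]
    (f : H →ₗ[K] H →ₗ[K] H →ₗ[K] W) : H ⊗[K] (H ⊗[K] H) →ₗ[K] W :=
  TensorProduct.lift ((TensorProduct.lift.equiv (RingHom.id K) H H W).toLinearMap ∘ₗ f)

@[simp] lemma L3_tmul {W : Type*} [AddCommGroup W] [Module K W]
    (f : H →ₗ[K] H →ₗ[K] H →ₗ[K] W) (p q s : H) :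
    L3 f (p ⊗ₜ[K] (q ⊗ₜ[K] s)) = f p q s := by
  simp [L3]

lemma sum_mul_antipodeSH {x : H} {ιrx : Type*} (rx : Coalgebra.Repr K x ιrx) :
    ∑ i ∈ rx.index, rx.left i * SH K H (rx.right i)
      = algebraMap K H (Coalgebra.counit (R := K) x) :=
  HopfAlgebra.sum_mul_antipode_eq_algebraMap_counit rx

lemma sum_antipodeSH_mul {x : H} {ιrx : Type*} (rx : Coalgebra.Repr K x ιrx) :
    ∑ i ∈ rx.index, SH K H (rx.left i) * rx.right i
      = algebraMap K H (Coalgebra.counit (R := K) x) :=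
  HopfAlgebra.sum_antipode_mul_eq_algebraMap_counit rx

end Aux

section Conv

open Coalgebra TensorProduct

variable {K H}

lemma sum_counit_smul {x : H} {ιrx : Type*} (rx : Coalgebra.Repr K x ιrx) :
    ∑ i ∈ rx.index, Coalgebra.counit (R := K) (rx.left i) • rx.right i = x := by
  calc ∑ i ∈ rx.index, Coalgebra.counit (R := K) (rx.left i) • rx.right i
      = TensorProduct.lid K H (∑ i ∈ rx.index,
          Coalgebra.counit (R := K) (rx.left i) ⊗ₜ[K] rx.right i) := by
        rw [map_sum]; simp
    _ = x := by rw [Coalgebra.sum_counit_tmul_eq (R := K) rx]; simp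

lemma sum_smul_counit {x : H} {ιrx : Type*} (rx : Coalgebra.Repr K x ιrx) :
    ∑ i ∈ rx.index, Coalgebra.counit (R := K) (rx.right i) • rx.left i = x := by
  calc ∑ i ∈ rx.index, Coalgebra.counit (R := K) (rx.right i) • rx.left i
      = TensorProduct.rid K H (∑ i ∈ rx.index,
          rx.left i ⊗ₜ[K] Coalgebra.counit (R := K) (rx.right i)) := by
        rw [map_sum]; simp
    _ = x := by rw [Coalgebra.sum_tmul_counit_eq (R := K) rx]; simp

variable (K H)

/-- Convolution product on linear maps from `H` to a `K`-algebra. -/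
noncomputable def conv {A' : Type*} [Semiring A'] [Algebra K A']
    (f g : H →ₗ[K] A') : H →ₗ[K] A' :=
  LinearMap.mul' K A' ∘ₗ TensorProduct.map f g ∘ₗ Coalgebra.comul

/-- Convolution unit. -/
noncomputable def convOne {A' : Type*} [Semiring A'] [Algebra K A'] : H →ₗ[K] A' :=
  Algebra.linearMap K A' ∘ₗ Coalgebra.counit

variable {K H}

lemma conv_repr {A' : Type*} [Semiring A'] [Algebra K A']
    (f g : H →ₗ[K] A') {x : H} {ιrx : Type*} (rx : Coalgebra.Repr K x ιrx) :
    conv K H f g x = ∑ i ∈ rx.index, f (rx.left i) * g (rx.right i) := by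
  rw [conv]
  simp only [LinearMap.comp_apply, ← rx.eq, map_sum]
  simp

lemma convOne_apply {A' : Type*} [Semiring A'] [Algebra K A'] (x : H) :
    convOne K H (A' := A') x = Coalgebra.counit (R := K) x • (1 : A') := by
  simp [convOne, Algebra.algebraMap_eq_smul_one]

lemma convOne_conv {A' : Type*} [Semiring A'] [Algebra K A'] (f : H →ₗ[K] A') :
    conv K H (convOne K H) f = f := by
  ext x
  rw [conv_repr _ _ (ℛ K x)]
  have : ∀ i ∈ (ℛ K x).index,
      convOne K H (A' := A') ((ℛ K x).left i) * f ((ℛ K x).right i)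
        = Coalgebra.counit (R := K) ((ℛ K x).left i) • f ((ℛ K x).right i) := by
    intro i _
    rw [convOne_apply, smul_mul_assoc, one_mul]
  rw [Finset.sum_congr rfl this]
  calc ∑ i ∈ (ℛ K x).index,
        Coalgebra.counit (R := K) ((ℛ K x).left i) • f ((ℛ K x).right i)
      = f (∑ i ∈ (ℛ K x).index,
          Coalgebra.counit (R := K) ((ℛ K x).left i) • (ℛ K x).right i) := by
        rw [map_sum]; simp
    _ = f x := by rw [sum_counit_smul]

lemma conv_convOne {A' : Type*} [Semiring A'] [Algebra K A'] (f : H →ₗ[K] A') :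
    conv K H f (convOne K H) = f := by
  ext x
  rw [conv_repr _ _ (ℛ K x)]
  have : ∀ i ∈ (ℛ K x).index,
      f ((ℛ K x).left i) * convOne K H (A' := A') ((ℛ K x).right i)
        = Coalgebra.counit (R := K) ((ℛ K x).right i) • f ((ℛ K x).left i) := by
    intro i _
    rw [convOne_apply, mul_smul_comm, mul_one]
  rw [Finset.sum_congr rfl this]
  calc ∑ i ∈ (ℛ K x).index,
        Coalgebra.counit (R := K) ((ℛ K x).right i) • f ((ℛ K x).left i)
      = f (∑ i ∈ (ℛ K x).index,
          Coalgebra.counit (R := K) ((ℛ K x).right i) • (ℛ K x).left i) := by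
        rw [map_sum]; simp
    _ = f x := by rw [sum_smul_counit]

lemma conv_assoc {A' : Type*} [Semiring A'] [Algebra K A'] (f g h : H →ₗ[K] A') :
    conv K H (conv K H f g) h = conv K H f (conv K H g h) := by
  ext x
  set rx := ℛ K x with hrx
  have base := Coalgebra.sum_map_tmul_tmul_eq (R := K) f g h x (repr := rx)
    (a₁ := fun i => ℛ K (rx.left i)) (a₂ := fun i => ℛ K (rx.right i))
  apply_fun (LinearMap.mul' K A' ∘ₗ LinearMap.lTensor A' (LinearMap.mul' K A')) at base
  simp only [map_sum, LinearMap.comp_apply, LinearMap.lTensor_tmul,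
    LinearMap.mul'_apply] at base
  rw [conv_repr _ _ rx]
  have hL : ∀ i ∈ rx.index, conv K H f g (rx.left i) * h (rx.right i)
      = ∑ j ∈ (ℛ K (rx.left i)).index,
          f ((ℛ K (rx.left i)).left j) * ((g ((ℛ K (rx.left i)).right j)) * h (rx.right i)) := by
    intro i _
    rw [conv_repr _ _ (ℛ K (rx.left i)), Finset.sum_mul]
    refine Finset.sum_congr rfl fun j _ => ?_
    rw [mul_assoc]
  rw [Finset.sum_congr rfl hL, ← base, conv_repr _ _ rx]
  refine Finset.sum_congr rfl fun i _ => ?_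
  rw [conv_repr _ _ (ℛ K (rx.right i)), Finset.mul_sum]

lemma conv_mulHom_antipode {A' : Type*} [Semiring A'] [Algebra K A']
    (e : H →ₗ[K] A') (he : ∀ x y : H, e (x * y) = e x * e y) (h1 : e 1 = 1) :
    conv K H e (e ∘ₗ SH K H) = convOne K H := by
  ext x
  rw [conv_repr _ _ (ℛ K x), convOne_apply]
  have : ∀ i ∈ (ℛ K x).index,
      e ((ℛ K x).left i) * (e ∘ₗ SH K H) ((ℛ K x).right i)
        = e ((ℛ K x).left i * HopfAlgebra.antipode (R := K) ((ℛ K x).right i)) := by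
    intro i _; rw [he]; rfl
  rw [Finset.sum_congr rfl this, ← map_sum, HopfAlgebra.sum_mul_antipode_eq_algebraMap_counit (ℛ K x),
    Algebra.algebraMap_eq_smul_one, map_smul, h1]

lemma conv_antipode_mulHom {A' : Type*} [Semiring A'] [Algebra K A']
    (e : H →ₗ[K] A') (he : ∀ x y : H, e (x * y) = e x * e y) (h1 : e 1 = 1) :
    conv K H (e ∘ₗ SH K H) e = convOne K H := by
  ext x
  rw [conv_repr _ _ (ℛ K x), convOne_apply]
  have : ∀ i ∈ (ℛ K x).index,
      (e ∘ₗ SH K H) ((ℛ K x).left i) * e ((ℛ K x).right i)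
        = e (HopfAlgebra.antipode (R := K) ((ℛ K x).left i) * (ℛ K x).right i) := by
    intro i _; rw [he]; rfl
  rw [Finset.sum_congr rfl this, ← map_sum, HopfAlgebra.sum_antipode_mul_eq_algebraMap_counit (ℛ K x),
    Algebra.algebraMap_eq_smul_one, map_smul, h1]

/-- A representation of the comultiplication of a product. -/
noncomputable def mulRepr {a b : H} {ιra : Type*} (ra : Coalgebra.Repr K a ιra) {ιrb : Type*} (rb : Coalgebra.Repr K b ιrb) :
    Coalgebra.Repr K (a * b) (ιra × ιrb) where
  index := ra.index ×ˢ rb.index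
  left p := ra.left p.1 * rb.left p.2
  right p := ra.right p.1 * rb.right p.2
  eq := by
    rw [Bialgebra.comul_mul, ← ra.eq, ← rb.eq, Finset.sum_mul_sum]
    rw [Finset.sum_product]
    refine Finset.sum_congr rfl fun i _ => Finset.sum_congr rfl fun j _ => ?_
    rw [Algebra.TensorProduct.tmul_mul_tmul]

lemma sum_antipodeSH_mul_mul {a b : H} {ιra : Type*} (ra : Coalgebra.Repr K a ιra) {ιrb : Type*} (rb : Coalgebra.Repr K b ιrb) :
    ∑ i ∈ ra.index, ∑ j ∈ rb.index,
      SH K H (ra.left i * rb.left j) * (ra.right i * rb.right j)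
      = algebraMap K H (Coalgebra.counit (R := K) (a * b)) := by
  rw [← Finset.sum_product']
  exact sum_antipodeSH_mul (mulRepr ra rb)

@[simp] lemma mulRepr_index {a b : H} {ιra : Type*} (ra : Coalgebra.Repr K a ιra) {ιrb : Type*} (rb : Coalgebra.Repr K b ιrb) :
    (mulRepr ra rb).index = ra.index ×ˢ rb.index := rfl
@[simp] lemma mulRepr_left {a b : H} {ιra : Type*} (ra : Coalgebra.Repr K a ιra) {ιrb : Type*} (rb : Coalgebra.Repr K b ιrb)
    (p : ιra × ιrb) : (mulRepr ra rb).left p = ra.left p.1 * rb.left p.2 := rfl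
@[simp] lemma mulRepr_right {a b : H} {ιra : Type*} (ra : Coalgebra.Repr K a ιra) {ιrb : Type*} (rb : Coalgebra.Repr K b ιrb)
    (p : ιra × ιrb) : (mulRepr ra rb).right p = ra.right p.1 * rb.right p.2 := rfl

end Conv

section Iota

open Coalgebra TensorProduct

/-- `x ↦ x ⊗ 1`. -/
noncomputable def iota1 : H →ₗ[K] H ⊗[K] H := (TensorProduct.mk K H H).flip 1
/-- `x ↦ 1 ⊗ x`. -/
noncomputable def iota2 : H →ₗ[K] H ⊗[K] H := TensorProduct.mk K H H 1
/-- `x ↦ x ⊗ 1 ⊗ 1`. -/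
noncomputable def jay1 : H →ₗ[K] H ⊗[K] (H ⊗[K] H) := (TensorProduct.mk K H (H ⊗[K] H)).flip 1
/-- `x ↦ 1 ⊗ x ⊗ 1`. -/
noncomputable def jay2 : H →ₗ[K] H ⊗[K] (H ⊗[K] H) :=
  TensorProduct.mk K H (H ⊗[K] H) 1 ∘ₗ iota1 K H
/-- `x ↦ 1 ⊗ 1 ⊗ x`. -/
noncomputable def jay3 : H →ₗ[K] H ⊗[K] (H ⊗[K] H) :=
  TensorProduct.mk K H (H ⊗[K] H) 1 ∘ₗ iota2 K H

variable {K H}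

@[simp] lemma iota1_apply (x : H) : iota1 K H x = x ⊗ₜ[K] 1 := rfl
@[simp] lemma iota2_apply (x : H) : iota2 K H x = 1 ⊗ₜ[K] x := rfl
@[simp] lemma jay1_apply (x : H) : jay1 K H x = x ⊗ₜ[K] (1 : H ⊗[K] H) := rfl
@[simp] lemma jay2_apply (x : H) : jay2 K H x = 1 ⊗ₜ[K] (x ⊗ₜ[K] 1) := rfl
@[simp] lemma jay3_apply (x : H) : jay3 K H x = 1 ⊗ₜ[K] ((1 : H) ⊗ₜ[K] x) := rfl

lemma iota1_mul (x y : H) : iota1 K H (x * y) = iota1 K H x * iota1 K H y := by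
  simp [Algebra.TensorProduct.tmul_mul_tmul]

lemma iota1_one : iota1 K H 1 = 1 := by
  simp [Algebra.TensorProduct.one_def]

lemma iota2_mul (x y : H) : iota2 K H (x * y) = iota2 K H x * iota2 K H y := by
  simp [Algebra.TensorProduct.tmul_mul_tmul]

lemma iota2_one : iota2 K H 1 = 1 := by
  simp [Algebra.TensorProduct.one_def]

lemma jay1_mul (x y : H) : jay1 K H (x * y) = jay1 K H x * jay1 K H y := by
  simp [Algebra.TensorProduct.tmul_mul_tmul]

lemma jay1_one : jay1 K H 1 = 1 := by
  rw [jay1_apply]; simp only [← Algebra.TensorProduct.one_def]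

lemma jay2_mul (x y : H) : jay2 K H (x * y) = jay2 K H x * jay2 K H y := by
  simp [Algebra.TensorProduct.tmul_mul_tmul]

lemma jay2_one : jay2 K H 1 = 1 := by
  rw [jay2_apply]; simp only [← Algebra.TensorProduct.one_def]

lemma jay3_mul (x y : H) : jay3 K H (x * y) = jay3 K H x * jay3 K H y := by
  simp [Algebra.TensorProduct.tmul_mul_tmul]

lemma jay3_one : jay3 K H 1 = 1 := by
  rw [jay3_apply]; simp only [← Algebra.TensorProduct.one_def]

lemma comul_eq_conv : (Coalgebra.comul : H →ₗ[K] H ⊗[K] H) = conv K H (iota1 K H) (iota2 K H) := by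
  ext x
  rw [conv_repr _ _ (ℛ K x)]
  calc Coalgebra.comul (R := K) x = ∑ i ∈ (ℛ K x).index, (ℛ K x).left i ⊗ₜ[K] (ℛ K x).right i :=
        ((ℛ K x).eq).symm
    _ = _ := by
        refine Finset.sum_congr rfl fun i _ => ?_
        simp [Algebra.TensorProduct.tmul_mul_tmul]

lemma antiComm_eq_conv :
    (TensorProduct.map (SH K H) (SH K H) ∘ₗ (TensorProduct.comm K H H).toLinearMap
        ∘ₗ Coalgebra.comul : H →ₗ[K] H ⊗[K] H)
      = conv K H (iota2 K H ∘ₗ SH K H) (iota1 K H ∘ₗ SH K H) := by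
  ext x
  rw [conv_repr _ _ (ℛ K x)]
  calc (TensorProduct.map (SH K H) (SH K H)) ((TensorProduct.comm K H H)
          (Coalgebra.comul (R := K) x))
      = ∑ i ∈ (ℛ K x).index, SH K H ((ℛ K x).right i) ⊗ₜ[K] SH K H ((ℛ K x).left i) := by
        rw [← (ℛ K x).eq]; simp [map_sum]
    _ = _ := by
        refine Finset.sum_congr rfl fun i _ => ?_
        simp [Algebra.TensorProduct.tmul_mul_tmul]

/-- The antipode is anti-comultiplicative. -/
lemma comul_antipode :
    (Coalgebra.comul ∘ₗ SH K H : H →ₗ[K] H ⊗[K] H)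
      = TensorProduct.map (SH K H) (SH K H) ∘ₗ (TensorProduct.comm K H H).toLinearMap
          ∘ₗ Coalgebra.comul := by
  have hσΔ : conv K H (Coalgebra.comul ∘ₗ SH K H) Coalgebra.comul = convOne K H := by
    ext x
    rw [conv_repr _ _ (ℛ K x)]
    have : ∀ i ∈ (ℛ K x).index,
        (Coalgebra.comul ∘ₗ SH K H) ((ℛ K x).left i) * Coalgebra.comul ((ℛ K x).right i)
          = Coalgebra.comul (R := K)
              (HopfAlgebra.antipode (R := K) ((ℛ K x).left i) * (ℛ K x).right i) := by
      intro i _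
      rw [Bialgebra.comul_mul]; rfl
    rw [Finset.sum_congr rfl this, ← map_sum, HopfAlgebra.sum_antipode_mul_eq_algebraMap_counit (ℛ K x)]
    simp [convOne]
  have hΔg2 : conv K H Coalgebra.comul
      (conv K H (iota2 K H ∘ₗ SH K H) (iota1 K H ∘ₗ SH K H)) = convOne K H := by
    rw [comul_eq_conv, conv_assoc, ← conv_assoc (iota2 K H),
      conv_mulHom_antipode (iota2 K H) iota2_mul iota2_one, convOne_conv,
      conv_mulHom_antipode (iota1 K H) iota1_mul iota1_one]
  calc (Coalgebra.comul ∘ₗ SH K H : H →ₗ[K] H ⊗[K] H)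
      = conv K H (Coalgebra.comul ∘ₗ SH K H) (convOne K H) := (conv_convOne _).symm
    _ = conv K H (Coalgebra.comul ∘ₗ SH K H)
          (conv K H Coalgebra.comul
            (conv K H (iota2 K H ∘ₗ SH K H) (iota1 K H ∘ₗ SH K H))) := by rw [hΔg2]
    _ = conv K H (conv K H (Coalgebra.comul ∘ₗ SH K H) Coalgebra.comul)
          (conv K H (iota2 K H ∘ₗ SH K H) (iota1 K H ∘ₗ SH K H)) := (conv_assoc _ _ _).symm
    _ = conv K H (convOne K H)
          (conv K H (iota2 K H ∘ₗ SH K H) (iota1 K H ∘ₗ SH K H)) := by rw [hσΔ]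
    _ = conv K H (iota2 K H ∘ₗ SH K H) (iota1 K H ∘ₗ SH K H) := convOne_conv _
    _ = _ := antiComm_eq_conv.symm

lemma comul_antipode_repr {t : H} {ιrt : Type*} (rt : Coalgebra.Repr K t ιrt) :
    Coalgebra.comul (R := K) (SH K H t)
      = ∑ j ∈ rt.index, SH K H (rt.right j) ⊗ₜ[K] SH K H (rt.left j) := by
  have h := LinearMap.congr_fun (comul_antipode (K := K) (H := H)) t
  simp only [LinearMap.comp_apply, LinearEquiv.coe_coe] at h
  rw [h, ← rt.eq]
  simp [map_sum]

end Iota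

section AntipodeMul

open Coalgebra TensorProduct

variable {K H}

lemma sum_mul_mul_antipode {u w : H} {ιru : Type*} (ru : Coalgebra.Repr K u ιru) {ιrw : Type*} (rw : Coalgebra.Repr K w ιrw) :
    ∑ m ∈ ru.index, ∑ n ∈ rw.index,
      (ru.left m * rw.left n) * (SH K H (rw.right n) * SH K H (ru.right m))
      = (Coalgebra.counit (R := K) u * Coalgebra.counit (R := K) w) • (1 : H) := by
  have step : ∀ m ∈ ru.index,
      ∑ n ∈ rw.index, (ru.left m * rw.left n) * (SH K H (rw.right n) * SH K H (ru.right m))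
        = Coalgebra.counit (R := K) w • (ru.left m * SH K H (ru.right m)) := by
    intro m _
    have h1 : ∀ n ∈ rw.index,
        (ru.left m * rw.left n) * (SH K H (rw.right n) * SH K H (ru.right m))
          = ru.left m * ((rw.left n * SH K H (rw.right n)) * SH K H (ru.right m)) := by
      intro n _
      rw [mul_assoc, ← mul_assoc (rw.left n)]
    rw [Finset.sum_congr rfl h1, ← Finset.mul_sum, ← Finset.sum_mul,
      sum_mul_antipodeSH rw, Algebra.algebraMap_eq_smul_one,
      smul_mul_assoc, one_mul, mul_smul_comm]
  rw [Finset.sum_congr rfl step, ← Finset.smul_sum, sum_mul_antipodeSH ru,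
    Algebra.algebraMap_eq_smul_one, smul_smul, mul_comm]

variable (K H)

/-- Trilinear helper `x₁ x₂ x₃ ↦ S(x₁c₁) * ((x₂c₂) * (c₃ * S x₃))`. -/
noncomputable def triA (c₁ c₂ c₃ : H) : H →ₗ[K] H →ₗ[K] H →ₗ[K] H :=
  LinearMap.mk₂ K
    (fun x₁ x₂ => LinearMap.mulLeft K (SH K H (x₁ * c₁)) ∘ₗ
      LinearMap.mulLeft K (x₂ * c₂) ∘ₗ LinearMap.mulLeft K c₃ ∘ₗ (SH K H))
    (by intros; ext z; simp [add_mul, mul_add, map_add, mul_assoc])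
    (by intros; ext z; simp [smul_mul_assoc, mul_smul_comm, map_smul, mul_assoc])
    (by intros; ext z; simp [add_mul, mul_add, map_add, mul_assoc])
    (by intros; ext z; simp [smul_mul_assoc, mul_smul_comm, map_smul, mul_assoc])

/-- Trilinear helper `y₁ y₂ y₃ ↦ S(d₁y₁) * ((d₂y₂) * (S y₃ * d₃))`. -/
noncomputable def triB (d₁ d₂ d₃ : H) : H →ₗ[K] H →ₗ[K] H →ₗ[K] H :=
  LinearMap.mk₂ K
    (fun y₁ y₂ => LinearMap.mulLeft K (SH K H (d₁ * y₁)) ∘ₗ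
      LinearMap.mulLeft K (d₂ * y₂) ∘ₗ LinearMap.mulRight K d₃ ∘ₗ (SH K H))
    (by intros; ext z; simp [add_mul, mul_add, map_add, mul_assoc])
    (by intros; ext z; simp [smul_mul_assoc, mul_smul_comm, map_smul, mul_assoc])
    (by intros; ext z; simp [add_mul, mul_add, map_add, mul_assoc])
    (by intros; ext z; simp [smul_mul_assoc, mul_smul_comm, map_smul, mul_assoc])

variable {K H}

@[simp] lemma triA_apply (c₁ c₂ c₃ x₁ x₂ x₃ : H) :
    triA K H c₁ c₂ c₃ x₁ x₂ x₃
      = SH K H (x₁ * c₁) * ((x₂ * c₂) * (c₃ * SH K H x₃)) := rfl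

@[simp] lemma triB_apply (d₁ d₂ d₃ y₁ y₂ y₃ : H) :
    triB K H d₁ d₂ d₃ y₁ y₂ y₃
      = SH K H (d₁ * y₁) * ((d₂ * y₂) * (SH K H y₃ * d₃)) := rfl

/-- The antipode is anti-multiplicative. -/
lemma antipode_mul (a b : H) : SH K H (a * b) = SH K H b * SH K H a := by
  classical
  set ra := ℛ K a with hra
  set rb := ℛ K b with hrb
  have hab : a * b = (∑ i ∈ ra.index, Coalgebra.counit (R := K) (ra.right i) • ra.left i)
      * (∑ j ∈ rb.index, Coalgebra.counit (R := K) (rb.right j) • rb.left j) := by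
    rw [sum_smul_counit ra, sum_smul_counit rb]
  have step1 : SH K H (a * b) = ∑ i ∈ ra.index, ∑ j ∈ rb.index,
      (Coalgebra.counit (R := K) (ra.right i) * Coalgebra.counit (R := K) (rb.right j))
        • SH K H (ra.left i * rb.left j) := by
    rw [hab, Finset.sum_mul_sum]
    simp only [map_sum, smul_mul_smul_comm, map_smul]
  have step2 : SH K H (a * b) = ∑ i ∈ ra.index, ∑ j ∈ rb.index,
      ∑ m ∈ (ℛ K (ra.right i)).index, ∑ n ∈ (ℛ K (rb.right j)).index,
        SH K H (ra.left i * rb.left j) *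
          (((ℛ K (ra.right i)).left m * (ℛ K (rb.right j)).left n) *
            (SH K H ((ℛ K (rb.right j)).right n) * SH K H ((ℛ K (ra.right i)).right m))) := by
    rw [step1]
    refine Finset.sum_congr rfl fun i _ => Finset.sum_congr rfl fun j _ => ?_
    simp only [← Finset.mul_sum]
    conv_rhs => rw [show (∑ m ∈ (ℛ K (ra.right i)).index, ∑ n ∈ (ℛ K (rb.right j)).index,
        ((ℛ K (ra.right i)).left m * (ℛ K (rb.right j)).left n) *
          (SH K H ((ℛ K (rb.right j)).right n) * SH K H ((ℛ K (ra.right i)).right m)))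
        = (Coalgebra.counit (R := K) (ra.right i) * Coalgebra.counit (R := K) (rb.right j))
            • (1 : H) from sum_mul_mul_antipode _ _]
    rw [mul_smul_comm, mul_one]
  -- rewrite step2 terms as values of a (summed) trilinear map
  set t : H →ₗ[K] H →ₗ[K] H →ₗ[K] H := ∑ j ∈ rb.index, ∑ n ∈ (ℛ K (rb.right j)).index,
    triA K H (rb.left j) ((ℛ K (rb.right j)).left n)
      (SH K H ((ℛ K (rb.right j)).right n)) with htdef
  have ht : ∀ x₁ x₂ x₃ : H, t x₁ x₂ x₃ = ∑ j ∈ rb.index, ∑ n ∈ (ℛ K (rb.right j)).index,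
      SH K H (x₁ * rb.left j) * ((x₂ * (ℛ K (rb.right j)).left n) *
        (SH K H ((ℛ K (rb.right j)).right n) * SH K H x₃)) := by
    intro x₁ x₂ x₃
    rw [htdef]
    simp [LinearMap.coe_sum, Finset.sum_apply]
  have step2' : SH K H (a * b) = ∑ i ∈ ra.index, ∑ m ∈ (ℛ K (ra.right i)).index,
      t (ra.left i) ((ℛ K (ra.right i)).left m) ((ℛ K (ra.right i)).right m) := by
    rw [step2]
    refine Finset.sum_congr rfl fun i _ => ?_
    rw [Finset.sum_comm]
    refine Finset.sum_congr rfl fun m _ => ?_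
    rw [ht]
  have baseA := Coalgebra.sum_tmul_tmul_eq (R := K) ra
    (fun i => ℛ K (ra.left i)) (fun i => ℛ K (ra.right i))
  have regA := congrArg (L3 t) baseA
  simp only [map_sum, L3_tmul] at regA
  have step3 : SH K H (a * b) = ∑ i ∈ ra.index, ∑ k ∈ (ℛ K (ra.left i)).index,
      t ((ℛ K (ra.left i)).left k) ((ℛ K (ra.left i)).right k) (ra.right i) := by
    rw [step2', ← regA]
  -- regroup the `b`-side
  have baseB := Coalgebra.sum_tmul_tmul_eq (R := K) rb
    (fun j => ℛ K (rb.left j)) (fun j => ℛ K (rb.right j))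
  have step4 : SH K H (a * b) = ∑ i ∈ ra.index, ∑ k ∈ (ℛ K (ra.left i)).index,
      ∑ j ∈ rb.index, ∑ l ∈ (ℛ K (rb.left j)).index,
        SH K H ((ℛ K (ra.left i)).left k * (ℛ K (rb.left j)).left l) *
          (((ℛ K (ra.left i)).right k * (ℛ K (rb.left j)).right l) *
            (SH K H (rb.right j) * SH K H (ra.right i))) := by
    rw [step3]
    refine Finset.sum_congr rfl fun i _ => Finset.sum_congr rfl fun k _ => ?_
    have regB := congrArg (L3 (triB K H ((ℛ K (ra.left i)).left k)
      ((ℛ K (ra.left i)).right k) (SH K H (ra.right i)))) baseB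
    simp only [map_sum, L3_tmul, triB_apply] at regB
    rw [ht, ← regB]
  -- collapse the inner double sums via the antipode axiom
  have step5 : SH K H (a * b) = ∑ i ∈ ra.index, ∑ j ∈ rb.index,
      (Coalgebra.counit (R := K) (ra.left i) * Coalgebra.counit (R := K) (rb.left j)) •
        (SH K H (rb.right j) * SH K H (ra.right i)) := by
    rw [step4]
    refine Finset.sum_congr rfl fun i _ => ?_
    rw [Finset.sum_comm]
    refine Finset.sum_congr rfl fun j _ => ?_
    have hterm : ∀ k ∈ (ℛ K (ra.left i)).index, ∀ l ∈ (ℛ K (rb.left j)).index,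
        SH K H ((ℛ K (ra.left i)).left k * (ℛ K (rb.left j)).left l) *
          (((ℛ K (ra.left i)).right k * (ℛ K (rb.left j)).right l) *
            (SH K H (rb.right j) * SH K H (ra.right i)))
          = (SH K H ((ℛ K (ra.left i)).left k * (ℛ K (rb.left j)).left l) *
              ((ℛ K (ra.left i)).right k * (ℛ K (rb.left j)).right l)) *
            (SH K H (rb.right j) * SH K H (ra.right i)) := by
      intro k _ l _; rw [← mul_assoc]
    calc ∑ k ∈ (ℛ K (ra.left i)).index, ∑ l ∈ (ℛ K (rb.left j)).index,
          SH K H ((ℛ K (ra.left i)).left k * (ℛ K (rb.left j)).left l) *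
            (((ℛ K (ra.left i)).right k * (ℛ K (rb.left j)).right l) *
              (SH K H (rb.right j) * SH K H (ra.right i)))
        = (∑ k ∈ (ℛ K (ra.left i)).index, ∑ l ∈ (ℛ K (rb.left j)).index,
            SH K H ((ℛ K (ra.left i)).left k * (ℛ K (rb.left j)).left l) *
              ((ℛ K (ra.left i)).right k * (ℛ K (rb.left j)).right l)) *
            (SH K H (rb.right j) * SH K H (ra.right i)) := by
          rw [Finset.sum_mul]
          refine Finset.sum_congr rfl fun k hk => ?_
          rw [Finset.sum_mul, Finset.sum_congr rfl (hterm k hk)]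
      _ = _ := by
          rw [sum_antipodeSH_mul_mul (ℛ K (ra.left i)) (ℛ K (rb.left j)),
            Bialgebra.counit_mul, Algebra.algebraMap_eq_smul_one,
            smul_mul_assoc, one_mul]
  -- final collapse
  rw [step5]
  have hinner : ∀ i ∈ ra.index,
      ∑ j ∈ rb.index, (Coalgebra.counit (R := K) (ra.left i)
          * Coalgebra.counit (R := K) (rb.left j)) •
            (SH K H (rb.right j) * SH K H (ra.right i))
        = Coalgebra.counit (R := K) (ra.left i) • (SH K H b * SH K H (ra.right i)) := by
    intro i _
    have : ∀ j ∈ rb.index, (Coalgebra.counit (R := K) (ra.left i)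
          * Coalgebra.counit (R := K) (rb.left j)) •
            (SH K H (rb.right j) * SH K H (ra.right i))
        = Coalgebra.counit (R := K) (ra.left i) •
            ((Coalgebra.counit (R := K) (rb.left j) • SH K H (rb.right j))
              * SH K H (ra.right i)) := by
      intro j _; rw [mul_smul, smul_mul_assoc]
    rw [Finset.sum_congr rfl this, ← Finset.smul_sum, ← Finset.sum_mul]
    have hsb : ∑ j ∈ rb.index, Coalgebra.counit (R := K) (rb.left j) • SH K H (rb.right j)
        = SH K H b := by
      have h' : ∑ j ∈ rb.index, Coalgebra.counit (R := K) (rb.left j) • SH K H (rb.right j)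
          = SH K H (∑ j ∈ rb.index, Coalgebra.counit (R := K) (rb.left j) • rb.right j) := by
        rw [map_sum]
        exact Finset.sum_congr rfl fun j _ => (map_smul _ _ _).symm
      rw [h', sum_counit_smul rb]
    rw [hsb]
  rw [Finset.sum_congr rfl hinner]
  have hlast : ∀ i ∈ ra.index,
      Coalgebra.counit (R := K) (ra.left i) • (SH K H b * SH K H (ra.right i))
        = SH K H b * (Coalgebra.counit (R := K) (ra.left i) • SH K H (ra.right i)) := by
    intro i _; rw [mul_smul_comm]
  rw [Finset.sum_congr rfl hlast, ← Finset.mul_sum]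
  have hsa : ∑ i ∈ ra.index, Coalgebra.counit (R := K) (ra.left i) • SH K H (ra.right i)
      = SH K H a := by
    have h' : ∑ i ∈ ra.index, Coalgebra.counit (R := K) (ra.left i) • SH K H (ra.right i)
        = SH K H (∑ i ∈ ra.index, Coalgebra.counit (R := K) (ra.left i) • ra.right i) := by
      rw [map_sum]
      exact Finset.sum_congr rfl fun i _ => (map_smul _ _ _).symm
    rw [h', sum_counit_smul ra]
  rw [hsa]

end AntipodeMul

section KeyLemmas

open Coalgebra TensorProduct

variable {K H}

lemma conv_jays :
    conv K H (conv K H (jay1 K H) (jay2 K H))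
        (conv K H (jay2 K H ∘ₗ SH K H) (jay3 K H ∘ₗ SH K H))
      = conv K H (jay1 K H) (jay3 K H ∘ₗ SH K H) := by
  rw [conv_assoc, ← conv_assoc (jay2 K H),
    conv_mulHom_antipode (jay2 K H) jay2_mul jay2_one, convOne_conv]

lemma conv_iotas :
    conv K H (conv K H (iota1 K H) (iota2 K H ∘ₗ SH K H)) (iota2 K H) = iota1 K H := by
  rw [conv_assoc, conv_antipode_mulHom (iota2 K H) iota2_mul iota2_one, conv_convOne]

variable {B V : Type*} [AddCommGroup B] [Module K B] [AddCommGroup V] [Module K V]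
variable (ρB : H →ₗ[K] B →ₗ[K] B) (ρV : H →ₗ[K] V →ₗ[K] V)
variable (r : B →ₗ[K] V →ₗ[K] V) (P : V →ₗ[K] V)

/-- Trilinear map `p q s ↦ r (ρB q c) (ρV p (P (ρV s m)))`. -/
noncomputable def triV (c : B) (m : V) : H →ₗ[K] H →ₗ[K] H →ₗ[K] V :=
  LinearMap.mk₂ K
    (fun p q => r (ρB q c) ∘ₗ ρV p ∘ₗ P ∘ₗ ρV.flip m)
    (by intros; ext s; simp [map_add])
    (by intros; ext s; simp [map_smul])
    (by intros; ext s; simp [map_add])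
    (by intros; ext s; simp [map_smul])

@[simp] lemma triV_apply (c : B) (m : V) (p q s : H) :
    triV ρB ρV r P c m p q s = r (ρB q c) (ρV p (P (ρV s m))) := rfl

lemma adjHom_mul_repr {W : Type*} [AddCommGroup W] [Module K W]
    (ρW : H →ₗ[K] W →ₗ[K] W) (ρV' : H →ₗ[K] V →ₗ[K] V)
    (ξ η : H) {ιrξ : Type*} (rξ : Coalgebra.Repr K ξ ιrξ) {ιrη : Type*} (rη : Coalgebra.Repr K η ιrη)
    (Q : V →ₗ[K] W) (w : V) :
    adjHom K H ρW ρV' (ξ * η) Q w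
      = ∑ i ∈ rξ.index, ∑ j ∈ rη.index,
          ρW (rξ.left i * rη.left j)
            (Q (ρV' (SH K H (rξ.right i * rη.right j)) w)) := by
  rw [adjHom_repr _ _ _ (mulRepr rξ rη), ← Finset.sum_product']
  rfl

/-- `adjHom ξ P` is right `B`-linear whenever `P` is. -/
lemma adj_right_linear
    (hBact : ∀ (ξ ζ : H) (c : B), ρB (ξ * ζ) c = ρB ξ (ρB ζ c))
    (hBone : ∀ c : B, ρB 1 c = c)
    (hcr : ∀ (ξ : H) (c : B) (m : V), ρV ξ (r c m) = sw K H (ΔH K H ξ) ρV ρB r.flip m c)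
    (hP : ∀ (c : B) (m : V), P (r c m) = r c (P m))
    (x : H) (c : B) (m : V) :
    adjHom K H ρV ρV x P (r c m) = r c (adjHom K H ρV ρV x P m) := by
  have hterm : ∀ i ∈ (ℛ K x).index,
      ρV ((ℛ K x).left i) (P (ρV (SH K H ((ℛ K x).right i)) (r c m)))
        = ∑ k ∈ (ℛ K ((ℛ K x).left i)).index,
            ∑ j ∈ (ℛ K ((ℛ K x).right i)).index,
              r (ρB ((ℛ K ((ℛ K x).left i)).right k
                    * SH K H ((ℛ K ((ℛ K x).right i)).left j)) c)
                (ρV ((ℛ K ((ℛ K x).left i)).left k)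
                  (P (ρV (SH K H ((ℛ K ((ℛ K x).right i)).right j)) m))) := by
    intro i _
    have inner1 : ρV (SH K H ((ℛ K x).right i)) (r c m)
        = ∑ j ∈ (ℛ K ((ℛ K x).right i)).index,
            r (ρB (SH K H ((ℛ K ((ℛ K x).right i)).left j)) c)
              (ρV (SH K H ((ℛ K ((ℛ K x).right i)).right j)) m) := by
      rw [hcr, sw_apply, DeltaH_eq, comul_antipode_repr (ℛ K ((ℛ K x).right i))]
      simp [map_sum]
    rw [inner1, map_sum, map_sum]
    have inner2 : ∀ j ∈ (ℛ K ((ℛ K x).right i)).index,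
        ρV ((ℛ K x).left i)
            (P (r (ρB (SH K H ((ℛ K ((ℛ K x).right i)).left j)) c)
              (ρV (SH K H ((ℛ K ((ℛ K x).right i)).right j)) m)))
          = ∑ k ∈ (ℛ K ((ℛ K x).left i)).index,
              r (ρB ((ℛ K ((ℛ K x).left i)).right k
                    * SH K H ((ℛ K ((ℛ K x).right i)).left j)) c)
                (ρV ((ℛ K ((ℛ K x).left i)).left k)
                  (P (ρV (SH K H ((ℛ K ((ℛ K x).right i)).right j)) m))) := by
      intro j _
      rw [hP, hcr, sw_apply, DeltaH_eq, ← (ℛ K ((ℛ K x).left i)).eq]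
      simp only [map_sum]
      refine Finset.sum_congr rfl fun k _ => ?_
      simp [hBact]
    rw [Finset.sum_congr rfl inner2, Finset.sum_comm]
  -- the convolution identity, transported
  have e1 : conv K H (conv K H (jay1 K H) (jay2 K H))
      (conv K H (jay2 K H ∘ₗ SH K H) (jay3 K H ∘ₗ SH K H)) x
        = ∑ i ∈ (ℛ K x).index, ∑ k ∈ (ℛ K ((ℛ K x).left i)).index,
            ∑ j ∈ (ℛ K ((ℛ K x).right i)).index,
              (ℛ K ((ℛ K x).left i)).left k ⊗ₜ[K]
                (((ℛ K ((ℛ K x).left i)).right k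
                    * SH K H ((ℛ K ((ℛ K x).right i)).left j)) ⊗ₜ[K]
                  SH K H ((ℛ K ((ℛ K x).right i)).right j)) := by
    rw [conv_repr _ _ (ℛ K x)]
    refine Finset.sum_congr rfl fun i _ => ?_
    rw [conv_repr _ _ (ℛ K ((ℛ K x).left i)), conv_repr _ _ (ℛ K ((ℛ K x).right i)),
      Finset.sum_mul_sum]
    refine Finset.sum_congr rfl fun k _ => Finset.sum_congr rfl fun j _ => ?_
    simp [Algebra.TensorProduct.tmul_mul_tmul]
  have e2 : conv K H (jay1 K H) (jay3 K H ∘ₗ SH K H) x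
      = ∑ i ∈ (ℛ K x).index,
          (ℛ K x).left i ⊗ₜ[K] ((1 : H) ⊗ₜ[K] SH K H ((ℛ K x).right i)) := by
    rw [conv_repr _ _ (ℛ K x)]
    refine Finset.sum_congr rfl fun i _ => ?_
    simp [Algebra.TensorProduct.tmul_mul_tmul]
  have hZ := e1.symm.trans ((congrFun (congrArg DFunLike.coe conv_jays) x).trans e2)
  have htr := congrArg (L3 (triV ρB ρV r P c m)) hZ
  simp only [map_sum, L3_tmul, triV_apply] at htr
  rw [adjHom_repr _ _ _ (ℛ K x), Finset.sum_congr rfl hterm, htr,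
    adjHom_repr _ _ _ (ℛ K x), map_sum]
  refine Finset.sum_congr rfl fun i _ => ?_
  rw [hBone]

/-- compatibility of the `H`-action with the adjoint action. -/
lemma rho_adj
    (hV1 : ∀ (ξ ζ : H) (v : V), ρV (ξ * ζ) v = ρV ξ (ρV ζ v))
    (u x : H) (m : V) :
    ρV u (adjHom K H ρV ρV x P m)
      = ∑ i ∈ (ℛ K u).index,
          adjHom K H ρV ρV ((ℛ K u).left i * x) P (ρV ((ℛ K u).right i) m) := by
  have expand : ∀ i ∈ (ℛ K u).index,
      adjHom K H ρV ρV ((ℛ K u).left i * x) P (ρV ((ℛ K u).right i) m)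
        = ∑ n ∈ (ℛ K x).index, ∑ k ∈ (ℛ K ((ℛ K u).left i)).index,
            ρV ((ℛ K ((ℛ K u).left i)).left k * (ℛ K x).left n)
              (P (ρV (SH K H ((ℛ K x).right n)
                * (SH K H ((ℛ K ((ℛ K u).left i)).right k) * (ℛ K u).right i)) m)) := by
    intro i _
    rw [adjHom_mul_repr ρV ρV _ _ (ℛ K ((ℛ K u).left i)) (ℛ K x), Finset.sum_comm]
    refine Finset.sum_congr rfl fun n _ => Finset.sum_congr rfl fun k _ => ?_
    rw [antipode_mul, ← hV1, mul_assoc]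
  rw [Finset.sum_congr rfl expand, Finset.sum_comm]
  -- now collapse the (i,k) double sum for each n
  have eU : conv K H (conv K H (iota1 K H) (iota2 K H ∘ₗ SH K H)) (iota2 K H) u
      = ∑ i ∈ (ℛ K u).index, ∑ k ∈ (ℛ K ((ℛ K u).left i)).index,
          (ℛ K ((ℛ K u).left i)).left k ⊗ₜ[K]
            (SH K H ((ℛ K ((ℛ K u).left i)).right k) * (ℛ K u).right i) := by
    rw [conv_repr _ _ (ℛ K u)]
    refine Finset.sum_congr rfl fun i _ => ?_
    rw [conv_repr _ _ (ℛ K ((ℛ K u).left i)), Finset.sum_mul]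
    refine Finset.sum_congr rfl fun k _ => ?_
    simp [Algebra.TensorProduct.tmul_mul_tmul]
  have hU := eU.symm.trans (congrFun (congrArg DFunLike.coe conv_iotas) u)
  -- hU : ∑ i ∑ k (… ⊗ₜ …) = u ⊗ₜ 1
  have collapse : ∀ n ∈ (ℛ K x).index,
      ∑ i ∈ (ℛ K u).index, ∑ k ∈ (ℛ K ((ℛ K u).left i)).index,
          ρV ((ℛ K ((ℛ K u).left i)).left k * (ℛ K x).left n)
            (P (ρV (SH K H ((ℛ K x).right n)
              * (SH K H ((ℛ K ((ℛ K u).left i)).right k) * (ℛ K u).right i)) m))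
        = ρV u (ρV ((ℛ K x).left n) (P (ρV (SH K H ((ℛ K x).right n)) m))) := by
    intro n _
    set Φ : H →ₗ[K] H →ₗ[K] V := LinearMap.mk₂ K
      (fun p q => ρV (p * (ℛ K x).left n) (P (ρV (SH K H ((ℛ K x).right n) * q) m)))
      (by intros; simp [add_mul, map_add])
      (by intros; simp [smul_mul_assoc, map_smul])
      (by intros; simp [mul_add, map_add])
      (by intros; simp [mul_smul_comm, map_smul]) with hΦ
    have htr := congrArg (TensorProduct.lift Φ) hU
    simp only [map_sum, TensorProduct.lift.tmul] at htr
    calc ∑ i ∈ (ℛ K u).index, ∑ k ∈ (ℛ K ((ℛ K u).left i)).index,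
          ρV ((ℛ K ((ℛ K u).left i)).left k * (ℛ K x).left n)
            (P (ρV (SH K H ((ℛ K x).right n)
              * (SH K H ((ℛ K ((ℛ K u).left i)).right k) * (ℛ K u).right i)) m))
        = ∑ i ∈ (ℛ K u).index, ∑ k ∈ (ℛ K ((ℛ K u).left i)).index,
            Φ ((ℛ K ((ℛ K u).left i)).left k)
              (SH K H ((ℛ K ((ℛ K u).left i)).right k) * (ℛ K u).right i) := by
          refine Finset.sum_congr rfl fun i _ => Finset.sum_congr rfl fun k _ => ?_
          rw [hΦ]; rfl
      _ = Φ u 1 := htr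
      _ = ρV u (ρV ((ℛ K x).left n) (P (ρV (SH K H ((ℛ K x).right n)) m))) := by
          rw [hΦ]
          simp only [LinearMap.mk₂_apply]
          rw [mul_one, hV1]
  rw [Finset.sum_congr rfl collapse, ← map_sum, adjHom_repr _ _ _ (ℛ K x)]

end KeyLemmas

section Cocycle

open Coalgebra TensorProduct

variable {K H}

lemma ins1_apply' (z : H ⊗[K] H) : ins1 K H z = (1 : H) ⊗ₜ[K] z := rfl
lemma ins3_tmul (a b : H) : ins3 K H (a ⊗ₜ[K] b) = a ⊗ₜ[K] (b ⊗ₜ[K] (1 : H)) := rfl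
lemma comulRight_tmul (a b : H) :
    comulRight K H (a ⊗ₜ[K] b) = a ⊗ₜ[K] (Coalgebra.comul (R := K) b) := rfl
lemma comulLeft_tmul (a b : H) :
    comulLeft K H (a ⊗ₜ[K] b)
      = (TensorProduct.assoc K H H H) ((Coalgebra.comul (R := K) a) ⊗ₜ[K] b) := rfl

lemma assocLin_mul (Z W : (H ⊗[K] H) ⊗[K] H) :
    (TensorProduct.assoc K H H H) (Z * W)
      = (TensorProduct.assoc K H H H) Z * (TensorProduct.assoc K H H H) W :=
  map_mul (Algebra.TensorProduct.assoc K K K H H H) Z W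

lemma ins1_mul (s t : H ⊗[K] H) : ins1 K H (s * t) = ins1 K H s * ins1 K H t := by
  simp [ins1_apply', Algebra.TensorProduct.tmul_mul_tmul]

lemma ins1_one : ins1 K H 1 = 1 := by
  rw [ins1_apply']; simp only [← Algebra.TensorProduct.one_def]

lemma ins3_mul (s t : H ⊗[K] H) : ins3 K H (s * t) = ins3 K H s * ins3 K H t := by
  induction s using TensorProduct.induction_on with
  | zero => simp
  | tmul a b =>
    induction t using TensorProduct.induction_on with
    | zero => simp
    | tmul c d => simp [Algebra.TensorProduct.tmul_mul_tmul, ins3_tmul]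
    | add t₁ t₂ h₁ h₂ => simp only [mul_add, map_add, h₁, h₂]
  | add s₁ s₂ h₁ h₂ => simp only [add_mul, map_add, h₁, h₂]

lemma ins3_one : ins3 K H 1 = 1 := by
  have h : (1 : H ⊗[K] H) = (1 : H) ⊗ₜ[K] (1 : H) := Algebra.TensorProduct.one_def
  rw [h, ins3_tmul]; simp only [← Algebra.TensorProduct.one_def]

lemma comulRight_mul (s t : H ⊗[K] H) :
    comulRight K H (s * t) = comulRight K H s * comulRight K H t := by
  induction s using TensorProduct.induction_on with
  | zero => simp
  | tmul a b =>
    induction t using TensorProduct.induction_on with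
    | zero => simp
    | tmul c d =>
      simp [Algebra.TensorProduct.tmul_mul_tmul, comulRight_tmul, Bialgebra.comul_mul]
    | add t₁ t₂ h₁ h₂ => simp only [mul_add, map_add, h₁, h₂]
  | add s₁ s₂ h₁ h₂ => simp only [add_mul, map_add, h₁, h₂]

lemma comulRight_one : comulRight K H 1 = 1 := by
  have h : (1 : H ⊗[K] H) = (1 : H) ⊗ₜ[K] (1 : H) := Algebra.TensorProduct.one_def
  rw [h, comulRight_tmul, Bialgebra.comul_one]
  simp only [← Algebra.TensorProduct.one_def]

lemma comulLeft_mul (s t : H ⊗[K] H) :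
    comulLeft K H (s * t) = comulLeft K H s * comulLeft K H t := by
  induction s using TensorProduct.induction_on with
  | zero => simp
  | tmul a b =>
    induction t using TensorProduct.induction_on with
    | zero => simp
    | tmul c d =>
      rw [Algebra.TensorProduct.tmul_mul_tmul, comulLeft_tmul, comulLeft_tmul,
        comulLeft_tmul, Bialgebra.comul_mul, ← assocLin_mul,
        Algebra.TensorProduct.tmul_mul_tmul]
    | add t₁ t₂ h₁ h₂ => simp only [mul_add, map_add, h₁, h₂]
  | add s₁ s₂ h₁ h₂ => simp only [add_mul, map_add, h₁, h₂]

lemma comulLeft_one : comulLeft K H 1 = 1 := by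
  have h : (1 : H ⊗[K] H) = (1 : H) ⊗ₜ[K] (1 : H) := Algebra.TensorProduct.one_def
  rw [h, comulLeft_tmul, Bialgebra.comul_one]
  have h2 : (1 : H ⊗[K] H) = (1 : H) ⊗ₜ[K] (1 : H) := Algebra.TensorProduct.one_def
  rw [h2]
  simp only [TensorProduct.assoc_tmul]
  simp only [← Algebra.TensorProduct.one_def]

lemma inv_cocycle {F Finv : H ⊗[K] H} (hF : IsTwist K H F Finv) :
    comulLeft K H Finv * ins3 K H Finv = comulRight K H Finv * ins1 K H Finv := by
  have ha'a : ins3 K H Finv * ins3 K H F = 1 := by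
    rw [← ins3_mul, hF.inv_mul, ins3_one]
  have hb'b : comulLeft K H Finv * comulLeft K H F = 1 := by
    rw [← comulLeft_mul, hF.inv_mul, comulLeft_one]
  have hcc' : ins1 K H F * ins1 K H Finv = 1 := by
    rw [← ins1_mul, hF.mul_inv, ins1_one]
  have hdd' : comulRight K H F * comulRight K H Finv = 1 := by
    rw [← comulRight_mul, hF.mul_inv, comulRight_one]
  have k1 : (comulLeft K H Finv * ins3 K H Finv) * (ins3 K H F * comulLeft K H F) = 1 := by
    rw [mul_assoc, ← mul_assoc (ins3 K H Finv), ha'a, one_mul, hb'b]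
  have k2 : (ins3 K H F * comulLeft K H F) * (comulRight K H Finv * ins1 K H Finv) = 1 := by
    rw [hF.cocycle, mul_assoc, ← mul_assoc (comulRight K H F), hdd', one_mul, hcc']
  calc comulLeft K H Finv * ins3 K H Finv
      = (comulLeft K H Finv * ins3 K H Finv)
          * ((ins3 K H F * comulLeft K H F) * (comulRight K H Finv * ins1 K H Finv)) := by
        rw [k2, mul_one]
    _ = ((comulLeft K H Finv * ins3 K H Finv) * (ins3 K H F * comulLeft K H F))
          * (comulRight K H Finv * ins1 K H Finv) := by simp only [mul_assoc]
    _ = comulRight K H Finv * ins1 K H Finv := by rw [k1, one_mul]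

end Cocycle

section MainSteps

open Coalgebra TensorProduct

variable {K H}
variable {B V : Type*} [AddCommGroup B] [Module K B] [AddCommGroup V] [Module K V]
variable (ρB : H →ₗ[K] B →ₗ[K] B) (ρV : H →ₗ[K] V →ₗ[K] V)
variable (r : B →ₗ[K] V →ₗ[K] V) (P : V →ₗ[K] V)

lemma DFhom_zero {W : Type*} [AddCommGroup W] [Module K W]
    (ρW : H →ₗ[K] W →ₗ[K] W) (ρV' : H →ₗ[K] V →ₗ[K] V) (Q : V →ₗ[K] W) (m : V) :
    DFhom K H (0 : H ⊗[K] H) ρW ρV' Q m = 0 := by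
  simp [DFhom]

lemma DFhom_add {W : Type*} [AddCommGroup W] [Module K W]
    (G₁ G₂ : H ⊗[K] H)
    (ρW : H →ₗ[K] W →ₗ[K] W) (ρV' : H →ₗ[K] V →ₗ[K] V) (Q : V →ₗ[K] W) (m : V) :
    DFhom K H (G₁ + G₂) ρW ρV' Q m
      = DFhom K H G₁ ρW ρV' Q m + DFhom K H G₂ ρW ρV' Q m := by
  simp [DFhom]

/-- The comparison map `p ⊗ q ⊗ s ↦ r (ρB s b) ((p ▶ P) (ρV q v))`. -/
noncomputable def Tmap (v : V) (b : B) : H ⊗[K] (H ⊗[K] H) →ₗ[K] V :=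
  L3 (LinearMap.mk₂ K
    (fun p q => (r.flip (adjHom K H ρV ρV p P (ρV q v))) ∘ₗ ρB.flip b)
    (by intros; ext s; simp [map_add])
    (by intros; ext s; simp [map_smul])
    (by intros; ext s; simp [map_add])
    (by intros; ext s; simp [map_smul]))

@[simp] lemma Tmap_tmul (v : V) (b : B) (p q s : H) :
    Tmap ρB ρV r P v b (p ⊗ₜ[K] (q ⊗ₜ[K] s))
      = r (ρB s b) (adjHom K H ρV ρV p P (ρV q v)) := by
  simp [Tmap]

lemma stepL
    (hV1 : ∀ (ξ ζ : H) (v : V), ρV (ξ * ζ) v = ρV ξ (ρV ζ v))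
    (hBact : ∀ (ξ ζ : H) (c : B), ρB (ξ * ζ) c = ρB ξ (ρB ζ c))
    (hBone : ∀ c : B, ρB 1 c = c)
    (hcr : ∀ (ξ : H) (c : B) (m : V), ρV ξ (r c m) = sw K H (ΔH K H ξ) ρV ρB r.flip m c)
    (hP : ∀ (c : B) (m : V), P (r c m) = r c (P m))
    (G G' : H ⊗[K] H) (v : V) (b : B) :
    DFhom K H G ρV ρV P (sw K H G' ρV ρB r.flip v b)
      = Tmap ρB ρV r P v b (comulRight K H G * ins1 K H G') := by
  induction G using TensorProduct.induction_on with
  | zero => simp [DFhom_zero]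
  | add G₁ G₂ h₁ h₂ => rw [DFhom_add, h₁, h₂, map_add, add_mul, map_add]
  | tmul x y =>
    induction G' using TensorProduct.induction_on with
    | zero => simp [sw_apply]
    | add G₁ G₂ h₁ h₂ =>
      rw [show sw K H (G₁ + G₂) ρV ρB r.flip v b
          = sw K H G₁ ρV ρB r.flip v b + sw K H G₂ ρV ρB r.flip v b by
            simp [sw_apply], map_add, h₁, h₂, map_add, mul_add, map_add]
    | tmul u w =>
      rw [DFhom_tmul, sw_tmul]
      have hy : ρV y (r.flip (ρV u v) (ρB w b))
          = ∑ k ∈ (ℛ K y).index,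
              r (ρB ((ℛ K y).right k * w) b) (ρV ((ℛ K y).left k * u) v) := by
        rw [LinearMap.flip_apply, hcr, sw_apply, DeltaH_eq, ← (ℛ K y).eq]
        simp only [map_sum]
        refine Finset.sum_congr rfl fun k _ => ?_
        simp [hBact, hV1]
      rw [hy, map_sum]
      have hadj : ∀ k ∈ (ℛ K y).index,
          adjHom K H ρV ρV x P
              (r (ρB ((ℛ K y).right k * w) b) (ρV ((ℛ K y).left k * u) v))
            = r (ρB ((ℛ K y).right k * w) b)
                (adjHom K H ρV ρV x P (ρV ((ℛ K y).left k * u) v)) :=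
        fun k _ => adj_right_linear ρB ρV r P hBact hBone hcr hP x _ _
      rw [Finset.sum_congr rfl hadj, comulRight_tmul, ins1_apply', ← (ℛ K y).eq,
        TensorProduct.tmul_sum, Finset.sum_mul, map_sum]
      refine (Finset.sum_congr rfl fun k _ => ?_).symm
      rw [Algebra.TensorProduct.tmul_mul_tmul, Algebra.TensorProduct.tmul_mul_tmul,
        mul_one, Tmap_tmul]

lemma stepR
    (hV1 : ∀ (ξ ζ : H) (v : V), ρV (ξ * ζ) v = ρV ξ (ρV ζ v))
    (hBact : ∀ (ξ ζ : H) (c : B), ρB (ξ * ζ) c = ρB ξ (ρB ζ c))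
    (G G' : H ⊗[K] H) (v : V) (b : B) :
    sw K H G' ρV ρB r.flip (DFhom K H G ρV ρV P v) b
      = Tmap ρB ρV r P v b (comulLeft K H G' * ins3 K H G) := by
  induction G' using TensorProduct.induction_on with
  | zero => simp [sw_apply]
  | add G₁ G₂ h₁ h₂ =>
    rw [show sw K H (G₁ + G₂) ρV ρB r.flip (DFhom K H G ρV ρV P v) b
        = sw K H G₁ ρV ρB r.flip (DFhom K H G ρV ρV P v) b
          + sw K H G₂ ρV ρB r.flip (DFhom K H G ρV ρV P v) b by simp [sw_apply],
      h₁, h₂, map_add, add_mul, map_add]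
  | tmul u w =>
    induction G using TensorProduct.induction_on with
    | zero => simp [DFhom_zero, sw_apply]
    | add G₁ G₂ h₁ h₂ =>
      rw [show DFhom K H (G₁ + G₂) ρV ρV P v
          = DFhom K H G₁ ρV ρV P v + DFhom K H G₂ ρV ρV P v from DFhom_add _ _ _ _ _ _,
        show sw K H (u ⊗ₜ[K] w) ρV ρB r.flip
            (DFhom K H G₁ ρV ρV P v + DFhom K H G₂ ρV ρV P v) b
          = sw K H (u ⊗ₜ[K] w) ρV ρB r.flip (DFhom K H G₁ ρV ρV P v) b
            + sw K H (u ⊗ₜ[K] w) ρV ρB r.flip (DFhom K H G₂ ρV ρV P v) b by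
          simp [sw_tmul, map_add], h₁, h₂, map_add, mul_add, map_add]
    | tmul x y =>
      rw [DFhom_tmul, sw_tmul, LinearMap.flip_apply, rho_adj ρV P hV1, map_sum,
        comulLeft_tmul, ins3_tmul, ← (ℛ K u).eq]
      have : (TensorProduct.assoc K H H H)
            ((∑ i ∈ (ℛ K u).index, (ℛ K u).left i ⊗ₜ[K] (ℛ K u).right i) ⊗ₜ[K] w)
          = ∑ i ∈ (ℛ K u).index, (ℛ K u).left i ⊗ₜ[K] ((ℛ K u).right i ⊗ₜ[K] w) := by
        rw [TensorProduct.sum_tmul, map_sum]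
        exact Finset.sum_congr rfl fun i _ => by rw [TensorProduct.assoc_tmul]
      rw [this, Finset.sum_mul, map_sum]
      refine Finset.sum_congr rfl fun i _ => ?_
      rw [Algebra.TensorProduct.tmul_mul_tmul, Algebra.TensorProduct.tmul_mul_tmul,
        mul_one, Tmap_tmul, hV1]

end MainSteps

/-- if `P` is a right `B`-linear endomorphism of the left `H`-module
`(A,B)`-bimodule `V`, then `D_F(P) = (f̄^α ▶ P) ∘ (f̄_α ▷)` is right `B_⋆`-linear
on the deformed module `V_⋆`: `D_F(P)(v ⋆ b) = D_F(P)(v) ⋆ b` where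
`v ⋆ b = (f̄^α ▷ v)·(f̄_α ▷ b)`. -/
theorem DF_right_star_linear (F Finv : H ⊗[K] H) (hF : IsTwist K H F Finv)
    (mA : A →ₗ[K] A →ₗ[K] A) (eA : A) (ρA : H →ₗ[K] A →ₗ[K] A)
    (mB : B →ₗ[K] B →ₗ[K] B) (eB : B) (ρB : H →ₗ[K] B →ₗ[K] B)
    (hAalg : ∀ a b c : A, mA (mA a b) c = mA a (mA b c))
    (hAone : ∀ a : A, mA eA a = a ∧ mA a eA = a)
    (hBalg : ∀ a b c : B, mB (mB a b) c = mB a (mB b c))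
    (hBone : ∀ a : B, mB eB a = a ∧ mB a eB = a)
    (hAma : IsModuleAlgebra K H mA ρA) (hBma : IsModuleAlgebra K H mB ρB)
    (ρV : H →ₗ[K] V →ₗ[K] V) (hV : IsHAction K H ρV)
    (l : A →ₗ[K] V →ₗ[K] V) (r : B →ₗ[K] V →ₗ[K] V)
    (hl : ∀ (a b : A) (v : V), l (mA a b) v = l a (l b v)) (hle : ∀ v : V, l eA v = v)
    (hr : ∀ (b b' : B) (v : V), r (mB b b') v = r b' (r b v)) (hre : ∀ v : V, r eB v = v)
    (hlr : ∀ (a : A) (b : B) (v : V), l a (r b v) = r b (l a v))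
    (hcl : ∀ (ξ : H) (a : A) (v : V), ρV ξ (l a v) = sw K H (ΔH K H ξ) ρA ρV l a v)
    (hcr : ∀ (ξ : H) (b : B) (v : V), ρV ξ (r b v) = sw K H (ΔH K H ξ) ρV ρB r.flip v b)
    (P : V →ₗ[K] V) (hP : ∀ (b : B) (v : V), P (r b v) = r b (P v)) :
    ∀ (v : V) (b : B),
      DFhom K H Finv ρV ρV P (sw K H Finv ρV ρB r.flip v b)
        = sw K H Finv ρV ρB r.flip (DFhom K H Finv ρV ρV P v) b := by
  intro v b
  rw [stepL ρB ρV r P hV.1 hBma.1.1 hBma.1.2 hcr hP Finv Finv v b,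
    stepR ρB ρV r P hV.1 hBma.1.1 Finv Finv v b, inv_cocycle hF]

end TwistPaper
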